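/- For any trace of the TSO-LB labelled transition system, the OBSERVATION axiom holds: the relation fre ; prop ; hb* on the read and write events of the trace is irreflexive. -/

import Mathlib

namespace TSOLB

/-- A TSO-LB state: local buffers per processor and a global buffer. -/
structure State (P A V : Type) where
  loc : P → A → V
  glob : A → V

/-- Actions of TSO-LB.  `read` and `write` are the observable labels
`Read(p,a,v)` / `Write(p,a,v)`; `prop p` is the propagate-to-`p` transition,
whose observable label is the silent label τ. -/
inductive Act (P A V : Type) where
  | read  (p : P) (a : A) (v : V)
  | write (p : P) (a : A) (v : V)
  | prop  (p : P)

variable {P A V : Type}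

/-- The transition relation of the TSO-LB labelled transition system. -/
inductive Step [DecidableEq P] [DecidableEq A] :
    State P A V → Act P A V → State P A V → Prop where
  | read (q : State P A V) (p : P) (a : A) (v : V) (h : q.loc p a = v) :
      Step q (Act.read p a v) q
  | write (q : State P A V) (p : P) (a : A) (v : V) :
      Step q (Act.write p a v)
        ⟨Function.update q.loc p (Function.update (q.loc p) a v),
         Function.update q.glob a v⟩
  | prop (q : State P A V) (p : P) :
      Step q (Act.prop p) ⟨Function.update q.loc p q.glob, q.glob⟩

/-- Initial states: every local buffer agrees with the global buffer. -/
def Init (q : State P A V) : Prop := ∀ p a, q.loc p a = q.glob a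

/-- A path of transitions with its sequence of actions. -/
inductive Path [DecidableEq P] [DecidableEq A] :
    State P A V → List (Act P A V) → State P A V → Prop where
  | nil (q : State P A V) : Path q [] q
  | cons {q q' qf : State P A V} {l : Act P A V} {T : List (Act P A V)} :
      Step q l q' → Path q' T qf → Path q (l :: T) qf

/-- A trace: a sequence of actions arising from a path starting at an initial state. -/
def IsTrace [DecidableEq P] [DecidableEq A] (T : List (Act P A V)) : Prop :=
  ∃ q0 qf : State P A V, Init q0 ∧ Path q0 T qf

/- Events of a trace are the occurrences in it, identified by their index. -/

/-- Event `i` is a write event. -/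
def IsWriteAt (T : List (Act P A V)) (i : ℕ) : Prop :=
  ∃ p a v, T[i]? = some (Act.write p a v)

/-- Event `i` is a read event. -/
def IsReadAt (T : List (Act P A V)) (i : ℕ) : Prop :=
  ∃ p a v, T[i]? = some (Act.read p a v)

/-- Event `i` is a read or write event. -/
def IsRW (T : List (Act P A V)) (i : ℕ) : Prop := IsWriteAt T i ∨ IsReadAt T i

/-- Event `i` is a read or write event of processor `p`. -/
def EvtOf (T : List (Act P A V)) (p : P) (i : ℕ) : Prop :=
  (∃ a v, T[i]? = some (Act.read p a v)) ∨ (∃ a v, T[i]? = some (Act.write p a v))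

/-- Event `i` is a read or write event to address `a`. -/
def EvtAddr (T : List (Act P A V)) (a : A) (i : ℕ) : Prop :=
  (∃ p v, T[i]? = some (Act.read p a v)) ∨ (∃ p v, T[i]? = some (Act.write p a v))

/-- Event `i` is a write to address `a`. -/
def WriteTo (T : List (Act P A V)) (a : A) (i : ℕ) : Prop :=
  ∃ p v, T[i]? = some (Act.write p a v)

/-- Event `k` is a write by `p` to `a` or a propagate to `p`. -/
def Src (T : List (Act P A V)) (p : P) (a : A) (k : ℕ) : Prop :=
  (∃ v, T[k]? = some (Act.write p a v)) ∨ T[k]? = some (Act.prop p)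

/-- `e` is the latest event before position `r` that is a write by `p` to `a`
or a propagate to `p`. -/
def LatestSrcBefore (T : List (Act P A V)) (p : P) (a : A) (e r : ℕ) : Prop :=
  e < r ∧ Src T p a e ∧ ∀ k, e < k → k < r → ¬ Src T p a k

/-- `w` is the latest write to `a` before position `e`. -/
def LatestWriteBefore (T : List (Act P A V)) (a : A) (w e : ℕ) : Prop :=
  w < e ∧ WriteTo T a w ∧ ∀ k, w < k → k < e → ¬ WriteTo T a k

/-- Coherence order: writes to the same address, in trace order. -/
def co (T : List (Act P A V)) (i j : ℕ) : Prop :=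
  i < j ∧ ∃ a, WriteTo T a i ∧ WriteTo T a j

/-- Reads-from: the read at `r` reads its value from the write at `w`, i.e. letting
`e` be the latest event before `r` that is a write by the reader to the read address
or a propagate to the reader, either `w = e`, or `e` is a propagate and `w` is the
latest write to that address before `e`. -/
def ReadsFrom (T : List (Act P A V)) (w r : ℕ) : Prop :=
  ∃ q a v, T[r]? = some (Act.read q a v) ∧ (∃ p, T[w]? = some (Act.write p a v)) ∧
    ∃ e, LatestSrcBefore T q a e r ∧
      (w = e ∨ (T[e]? = some (Act.prop q) ∧ LatestWriteBefore T a w e))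

/-- The reads-from relation `rf`. -/
def rf (T : List (Act P A V)) (w r : ℕ) : Prop := ReadsFrom T w r

/-- Program order: read/write events of the same processor in trace order. -/
def po (T : List (Act P A V)) (i j : ℕ) : Prop :=
  i < j ∧ ∃ p, EvtOf T p i ∧ EvtOf T p j

/-- `po-loc`: program order restricted to pairs of events with the same address. -/
def poloc (T : List (Act P A V)) (i j : ℕ) : Prop :=
  po T i j ∧ ∃ a, EvtAddr T a i ∧ EvtAddr T a j

/-- Preserved program order: `po` minus write-before-read pairs. -/
def ppo (T : List (Act P A V)) (i j : ℕ) : Prop :=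
  po T i j ∧ ¬ (IsWriteAt T i ∧ IsReadAt T j)

/-- From-read: `fr := rf⁻¹ ; co`. -/
def fr (T : List (Act P A V)) (i j : ℕ) : Prop :=
  ∃ w, rf T w i ∧ co T w j

/-- The two events are from distinct processors. -/
def Ext (T : List (Act P A V)) (i j : ℕ) : Prop :=
  ∃ p q, p ≠ q ∧ EvtOf T p i ∧ EvtOf T q j

/-- External reads-from: `rf` restricted to distinct processors. -/
def rfe (T : List (Act P A V)) (i j : ℕ) : Prop := rf T i j ∧ Ext T i j

/-- External from-read: `fr` restricted to distinct processors. -/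
def fre (T : List (Act P A V)) (i j : ℕ) : Prop := fr T i j ∧ Ext T i j

/-- Communication order: `com := co ∪ rf ∪ fr`. -/
def com (T : List (Act P A V)) (i j : ℕ) : Prop :=
  co T i j ∨ rf T i j ∨ fr T i j

/-- Happens-before (TSO, no fences): `hb := ppo ∪ rfe`. -/
def hb (T : List (Act P A V)) (i j : ℕ) : Prop := ppo T i j ∨ rfe T i j

/-- Propagation order (TSO, no fences): `prop := ppo ∪ rfe ∪ fr`. -/
def propRel (T : List (Act P A V)) (i j : ℕ) : Prop :=
  ppo T i j ∨ rfe T i j ∨ fr T i j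

/-- A relation is acyclic iff its transitive closure is irreflexive. -/
def Acyclic {α : Type*} (r : α → α → Prop) : Prop :=
  Irreflexive (Relation.TransGen r)

/-- Strict order on optional positions: `none` (no anchor) comes first. -/
def OLt : Option ℕ → Option ℕ → Prop
  | none, some _ => True
  | some m, some n => m < n
  | _, _ => False

/-- The anchor of a read/write event used to define the logical-time order `L`:
a write is anchored at itself; a read is anchored at the latest earlier event
that is a write by the reader to the read address or a propagate to the reader
(`none` if there is no such event, placing the read at the start of `L`). -/
def AnchorOf (T : List (Act P A V)) (i : ℕ) (o : Option ℕ) : Prop :=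
  (IsWriteAt T i ∧ o = some i) ∨
  (∃ p a v, T[i]? = some (Act.read p a v) ∧
    ((o = none ∧ ∀ k, k < i → ¬ Src T p a k) ∨
     (∃ e, o = some e ∧ LatestSrcBefore T p a e i)))

/-- The logical-time order `L` on read/write events: writes in trace order; each read
placed immediately after its anchor (reads with no anchor at the start); events
placed at the same point ordered by trace order. -/
def L (T : List (Act P A V)) (i j : ℕ) : Prop :=
  ∃ oi oj, AnchorOf T i oi ∧ AnchorOf T j oj ∧
    (OLt oi oj ∨ (oi = oj ∧ i < j))

section Aux

variable [DecidableEq P] [DecidableEq A]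

/-- Is event `k` a propagate to `q`? (Boolean, to allow filtering.) -/
def isPropTo (T : List (Act P A V)) (q : P) (k : ℕ) : Bool :=
  match T[k]? with
  | some (Act.prop q') => q' = q
  | _ => false

lemma isPropTo_iff {T : List (Act P A V)} {q : P} {k : ℕ} :
    isPropTo T q k = true ↔ T[k]? = some (Act.prop q) := by
  rcases h : T[k]? with _ | a
  · simp [isPropTo, h]
  · cases a <;> simp [isPropTo, h, eq_comm]

/-- Timestamp of an event: a write at its own position; a read at the last
propagate to the reader before it (`⊥` if none); non-events at `⊥`. -/
def tstamp (T : List (Act P A V)) (i : ℕ) : WithBot ℕ :=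
  match T[i]? with
  | some (Act.write _ _ _) => (i : WithBot ℕ)
  | some (Act.read q _ _) =>
      ((Finset.range i).filter (fun k => isPropTo T q k)).max
  | _ => ⊥

lemma tstamp_write {T : List (Act P A V)} {i : ℕ} {p a v}
    (h : T[i]? = some (Act.write p a v)) : tstamp T i = (i : WithBot ℕ) := by
  unfold tstamp; rw [h]

lemma tstamp_read {T : List (Act P A V)} {i : ℕ} {q a v}
    (h : T[i]? = some (Act.read q a v)) :
    tstamp T i = ((Finset.range i).filter (fun k => isPropTo T q k)).max := by
  unfold tstamp; rw [h]

lemma tstamp_read_lt {T : List (Act P A V)} {i : ℕ} {q a v}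
    (h : T[i]? = some (Act.read q a v)) : tstamp T i < (i : WithBot ℕ) := by
  rw [tstamp_read h]
  rcases hm : ((Finset.range i).filter (fun k => isPropTo T q k)).max with _ | m
  · exact WithBot.bot_lt_coe i
  · have hmem := Finset.mem_of_max hm
    rw [Finset.mem_filter, Finset.mem_range] at hmem
    exact WithBot.coe_lt_coe.2 hmem.1

lemma le_tstamp_read {T : List (Act P A V)} {r k : ℕ} {q a v}
    (h : T[r]? = some (Act.read q a v)) (hk : k < r)
    (hp : T[k]? = some (Act.prop q)) : (k : WithBot ℕ) ≤ tstamp T r := by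
  rw [tstamp_read h]
  exact Finset.le_max (Finset.mem_filter.2
    ⟨Finset.mem_range.2 hk, isPropTo_iff.2 hp⟩)

lemma tstamp_read_le {T : List (Act P A V)} {r e : ℕ} {q a v}
    (h : T[r]? = some (Act.read q a v)) (hl : LatestSrcBefore T q a e r) :
    tstamp T r ≤ (e : WithBot ℕ) := by
  rw [tstamp_read h]
  rcases hm : ((Finset.range r).filter (fun k => isPropTo T q k)).max with _ | m
  · exact bot_le
  · have hmem := Finset.mem_of_max hm
    rw [Finset.mem_filter, Finset.mem_range] at hmem
    have hsrc : Src T q a m := Or.inr (isPropTo_iff.1 hmem.2)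
    have : m ≤ e := by
      by_contra hc
      exact hl.2.2 m (lt_of_not_ge hc) hmem.1 hsrc
    exact WithBot.coe_le_coe.2 this

lemma tstamp_read_mono {T : List (Act P A V)} {r1 r2 : ℕ} {q a1 v1 a2 v2}
    (h1 : T[r1]? = some (Act.read q a1 v1)) (h2 : T[r2]? = some (Act.read q a2 v2))
    (h : r1 ≤ r2) : tstamp T r1 ≤ tstamp T r2 := by
  rw [tstamp_read h1, tstamp_read h2]
  exact Finset.max_mono (Finset.filter_subset_filter _ (Finset.range_subset_range.2 h))

/-- The strict order used for the proof: lexicographic on (timestamp, index). -/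
def SOrd (T : List (Act P A V)) (i j : ℕ) : Prop :=
  tstamp T i < tstamp T j ∨ (tstamp T i = tstamp T j ∧ i < j)

lemma SOrd_trans {T : List (Act P A V)} {i j k : ℕ}
    (h1 : SOrd T i j) (h2 : SOrd T j k) : SOrd T i k := by
  rcases h1 with h1 | ⟨h1, h1'⟩ <;> rcases h2 with h2 | ⟨h2, h2'⟩
  · exact Or.inl (lt_trans h1 h2)
  · exact Or.inl (h2 ▸ h1)
  · exact Or.inl (h1 ▸ h2)
  · exact Or.inr ⟨h1.trans h2, Nat.lt_trans h1' h2'⟩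

lemma SOrd_irrefl {T : List (Act P A V)} {i : ℕ} (h : SOrd T i i) : False := by
  rcases h with h | ⟨_, h⟩
  · exact lt_irrefl _ h
  · exact Nat.lt_irrefl _ h

lemma edge_SOrd {T : List (Act P A V)} {i j : ℕ}
    (h : ppo T i j ∨ rfe T i j ∨ fr T i j) : SOrd T i j := by
  rcases h with ⟨⟨hij, p, hi, hj⟩, hn⟩ | ⟨⟨q, a, v, hr, ⟨p, hw⟩, e, hlat, hcase⟩, hext⟩
      | ⟨w, ⟨q, a, v, hr, ⟨p, hw⟩, e, hlat, hcase⟩, hwj, a2, hWw, hWj⟩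
  · -- ppo
    rcases hi with ⟨a1, v1, hri⟩ | ⟨a1, v1, hwi⟩ <;>
      rcases hj with ⟨a2, v2, hrj⟩ | ⟨a2, v2, hwj⟩
    · -- read, read
      have := tstamp_read_mono hri hrj (le_of_lt hij)
      rcases lt_or_eq_of_le this with h | h
      · exact Or.inl h
      · exact Or.inr ⟨h, hij⟩
    · -- read, write
      refine Or.inl ?_
      calc tstamp T i < (i : WithBot ℕ) := tstamp_read_lt hri
        _ < (j : WithBot ℕ) := by exact_mod_cast hij
        _ = tstamp T j := (tstamp_write hwj).symm
    · -- write, read: excluded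
      exact absurd ⟨⟨p, a1, v1, hwi⟩, ⟨p, a2, v2, hrj⟩⟩ hn
    · -- write, write
      refine Or.inl ?_
      rw [tstamp_write hwi, tstamp_write hwj]
      exact_mod_cast hij
  · -- rfe
    obtain ⟨p', q', hpq, hei, hej⟩ := hext
    have hp' : p' = p := by
      rcases hei with ⟨a', v', h'⟩ | ⟨a', v', h'⟩ <;>
        rw [hw] at h' <;> simp only [Option.some.injEq] at h'
      · cases h'
      · simp only [Act.write.injEq] at h'
        exact h'.1.symm
    have hq' : q' = q := by
      rcases hej with ⟨a', v', h'⟩ | ⟨a', v', h'⟩ <;>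
        rw [hr] at h' <;> simp only [Option.some.injEq] at h'
      · simp only [Act.read.injEq] at h'
        exact h'.1.symm
      · cases h'
    subst hp'; subst hq'
    rcases hcase with hcase | ⟨hprop, hlw⟩
    · -- w = e : e must be a write by q or a prop to q, both contradict
      subst hcase
      rcases hlat.2.1 with ⟨v', hv⟩ | hv <;>
        rw [hw] at hv <;> simp only [Option.some.injEq] at hv
      · simp only [Act.write.injEq] at hv
        exact absurd hv.1 hpq
      · cases hv
    · refine Or.inl ?_
      calc tstamp T i = (i : WithBot ℕ) := tstamp_write hw
        _ < (e : WithBot ℕ) := by exact_mod_cast hlw.1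
        _ ≤ tstamp T j := le_tstamp_read hr hlat.1 hprop
  · -- fr
    obtain ⟨p2, v2, h2⟩ := hWw
    have ha2 : a2 = a := by
      rw [hw] at h2; simp only [Option.some.injEq, Act.write.injEq] at h2
      exact h2.2.1.symm
    subst ha2
    obtain ⟨p3, v3, h3⟩ := hWj
    have hej : e < j := by
      rcases hcase with hcase | ⟨hprop, hwe, _, hlast⟩
      · exact hcase ▸ hwj
      · rcases lt_trichotomy j e with h | h | h
        · exact absurd ⟨p3, v3, h3⟩ (hlast j hwj h)
        · exfalso; rw [← h, h3] at hprop
          simp only [Option.some.injEq] at hprop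
          cases hprop
        · exact h
    refine Or.inl ?_
    calc tstamp T i ≤ (e : WithBot ℕ) := tstamp_read_le hr hlat
      _ < (j : WithBot ℕ) := by exact_mod_cast hej
      _ = tstamp T j := (tstamp_write h3).symm

lemma hb_SOrd {T : List (Act P A V)} {i j : ℕ} (h : hb T i j) : SOrd T i j := by
  rcases h with h | h
  · exact edge_SOrd (Or.inl h)
  · exact edge_SOrd (Or.inr (Or.inl h))

lemma hbstar_SOrd {T : List (Act P A V)} {i j : ℕ}
    (h : Relation.ReflTransGen (hb T) i j) : i = j ∨ SOrd T i j := by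
  induction h with
  | refl => exact Or.inl rfl
  | tail _ hedge ih =>
      right
      rcases ih with rfl | hS
      · exact hb_SOrd hedge
      · exact SOrd_trans hS (hb_SOrd hedge)

end Aux

/-- For any trace of TSO-LB, the OBSERVATION axiom holds:
the relation `fre ; prop ; hb*` is irreflexive. -/
theorem tsolb_observation
    (P A V : Type) [Fintype P] [Fintype A] [Fintype V] [DecidableEq P] [DecidableEq A]
    (T : List (Act P A V)) (hT : IsTrace T) :
    Irreflexive
      (Relation.Comp (fre T)
        (Relation.Comp (propRel T) (Relation.ReflTransGen (hb T)))) := by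
  rintro x ⟨b, ⟨hfr, _⟩, c, hprop, hstar⟩
  have h1 : SOrd T x b := edge_SOrd (Or.inr (Or.inr hfr))
  have h2 : SOrd T b c := by
    rcases hprop with h | h | h
    · exact edge_SOrd (Or.inl h)
    · exact edge_SOrd (Or.inr (Or.inl h))
    · exact edge_SOrd (Or.inr (Or.inr h))
  have h3 := hbstar_SOrd hstar
  rcases h3 with rfl | h3
  · exact SOrd_irrefl (SOrd_trans h1 h2)
  · exact SOrd_irrefl (SOrd_trans (SOrd_trans h1 h2) h3)

end TSOLB
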